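/- Let (𝒫, 𝒬) be the coarsest equitable joint partition of matrices A¹ ∈ ℝ^{V¹×W¹} and A² ∈ ℝ^{V²×W²}. Then for i = 1, 2, the restriction (𝒫^i, 𝒬^i) with 𝒫^i = {P ∩ V^i : P ∈ 𝒫, P ∩ V^i ≠ ∅} and 𝒬^i = {Q ∩ W^i : Q ∈ 𝒬, Q ∩ W^i ≠ ∅} is the coarsest equitable partition of A^i. -/

import Mathlib

open Finset Matrix
open scoped Classical

/-- An equitable partition of `A`, with partitions encoded as setoids on the row and
column index sets. -/
def Equitable {V W : Type*} [Fintype V] [Fintype W] (A : Matrix V W ℝ)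
    (s : Setoid V) (t : Setoid W) : Prop :=
  (∀ v v', s.r v v' → ∀ w : W,
      ∑ w' ∈ univ.filter (fun w' => t.r w w'), A v w' =
      ∑ w' ∈ univ.filter (fun w' => t.r w w'), A v' w') ∧
  (∀ w w', t.r w w' → ∀ v : V,
      ∑ v' ∈ univ.filter (fun v' => s.r v v'), A v' w =
      ∑ v' ∈ univ.filter (fun v' => s.r v v'), A v' w')

/-- `(s, t)` is the coarsest equitable partition of `A`: it is equitable and every
equitable partition refines it. -/
def CoarsestEquitable {V W : Type*} [Fintype V] [Fintype W] (A : Matrix V W ℝ)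
    (s : Setoid V) (t : Setoid W) : Prop :=
  Equitable A s t ∧
  ∀ (s' : Setoid V) (t' : Setoid W), Equitable A s' t' →
    (∀ v v', s'.r v v' → s.r v v') ∧ (∀ w w', t'.r w w' → t.r w w')

/-- The direct sum `A¹ ⊕ A²` of two matrices: block diagonal with blocks `A¹` and `A²`. -/
def dsum {V1 W1 V2 W2 : Type*} (A1 : Matrix V1 W1 ℝ) (A2 : Matrix V2 W2 ℝ) :
    Matrix (V1 ⊕ V2) (W1 ⊕ W2) ℝ :=
  Matrix.of fun v w =>
    match v, w with
    | .inl v, .inl w => A1 v w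
    | .inr v, .inr w => A2 v w
    | _, _ => 0

/-- Combine a setoid on `α` with equality on `β` to get a setoid on `α ⊕ β`. -/
def leftSetoid {α β : Type*} (s : Setoid α) : Setoid (α ⊕ β) where
  r a b := match a, b with
    | .inl x, .inl y => s.r x y
    | .inr x, .inr y => x = y
    | _, _ => False
  iseqv := by
    refine ⟨fun a => ?_, fun {a b} h => ?_, fun {a b c} h h' => ?_⟩
    · cases a <;> first | exact s.refl _ | rfl
    · cases a <;> cases b <;> simp_all only [] <;> first | exact s.symm h | exact h.symm
    · cases a <;> cases b <;> cases c <;> simp_all only [] <;>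
        first | exact s.trans h h' | exact h.trans h'

def rightSetoid {α β : Type*} (s : Setoid β) : Setoid (α ⊕ β) where
  r a b := match a, b with
    | .inl x, .inl y => x = y
    | .inr x, .inr y => s.r x y
    | _, _ => False
  iseqv := by
    refine ⟨fun a => ?_, fun {a b} h => ?_, fun {a b c} h h' => ?_⟩
    · cases a <;> first | exact s.refl _ | rfl
    · cases a <;> cases b <;> simp_all only [] <;> first | exact s.symm h | exact h.symm
    · cases a <;> cases b <;> cases c <;> simp_all only [] <;>
        first | exact s.trans h h' | exact h.trans h'

section Sums
set_option linter.unusedSectionVars false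
variable {V1 W1 V2 W2 : Type*} [Fintype V1] [Fintype W1] [Fintype V2] [Fintype W2]
  (A1 : Matrix V1 W1 ℝ) (A2 : Matrix V2 W2 ℝ)

lemma row_sum_inl (p : W1 ⊕ W2 → Prop) (v : V1) :
    ∑ w' ∈ univ.filter p, dsum A1 A2 (.inl v) w' =
    ∑ w' ∈ univ.filter (fun w' => p (.inl w')), A1 v w' := by
  rw [Finset.sum_filter, Finset.sum_filter, Fintype.sum_sum_type]
  simp [dsum]

lemma row_sum_inr (p : W1 ⊕ W2 → Prop) (v : V2) :
    ∑ w' ∈ univ.filter p, dsum A1 A2 (.inr v) w' =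
    ∑ w' ∈ univ.filter (fun w' => p (.inr w')), A2 v w' := by
  rw [Finset.sum_filter, Finset.sum_filter, Fintype.sum_sum_type]
  simp [dsum]

lemma col_sum_inl (p : V1 ⊕ V2 → Prop) (w : W1) :
    ∑ v' ∈ univ.filter p, dsum A1 A2 v' (.inl w) =
    ∑ v' ∈ univ.filter (fun v' => p (.inl v')), A1 v' w := by
  rw [Finset.sum_filter, Finset.sum_filter, Fintype.sum_sum_type]
  simp [dsum]

lemma col_sum_inr (p : V1 ⊕ V2 → Prop) (w : W2) :
    ∑ v' ∈ univ.filter p, dsum A1 A2 v' (.inr w) =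
    ∑ v' ∈ univ.filter (fun v' => p (.inr v')), A2 v' w := by
  rw [Finset.sum_filter, Finset.sum_filter, Fintype.sum_sum_type]
  simp [dsum]

lemma left_equitable (s : Setoid V1) (t : Setoid W1) (h : Equitable A1 s t) :
    Equitable (dsum A1 A2) (leftSetoid s) (leftSetoid t) := by
  obtain ⟨hr, hc⟩ := h
  constructor
  · rintro (v | v) (v' | v') hvv' w <;> (rw [leftSetoid] at hvv'; simp only [] at hvv')
    · cases w with
      | inl w =>
        rw [row_sum_inl, row_sum_inl]
        exact hr v v' hvv' w
      | inr w =>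
        rw [row_sum_inl, row_sum_inl]
        exact (Finset.sum_eq_zero (fun x hx => by have h := (Finset.mem_filter.1 hx).2; exact absurd h (fun h => h))).trans
          (Finset.sum_eq_zero (fun x hx => by have h := (Finset.mem_filter.1 hx).2; exact absurd h (fun h => h))).symm
    · subst hvv'; rfl
  · rintro (w | w) (w' | w') hww' v <;> (rw [leftSetoid] at hww'; simp only [] at hww')
    · cases v with
      | inl v =>
        rw [col_sum_inl, col_sum_inl]
        exact hc w w' hww' v
      | inr v =>
        rw [col_sum_inl, col_sum_inl]
        exact (Finset.sum_eq_zero (fun x hx => by have h := (Finset.mem_filter.1 hx).2; exact absurd h (fun h => h))).trans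
          (Finset.sum_eq_zero (fun x hx => by have h := (Finset.mem_filter.1 hx).2; exact absurd h (fun h => h))).symm
    · subst hww'; rfl

lemma right_equitable (s : Setoid V2) (t : Setoid W2) (h : Equitable A2 s t) :
    Equitable (dsum A1 A2) (rightSetoid s) (rightSetoid t) := by
  obtain ⟨hr, hc⟩ := h
  constructor
  · rintro (v | v) (v' | v') hvv' w <;> (rw [rightSetoid] at hvv'; simp only [] at hvv')
    · subst hvv'; rfl
    · cases w with
      | inl w =>
        rw [row_sum_inr, row_sum_inr]
        exact (Finset.sum_eq_zero (fun x hx => by have h := (Finset.mem_filter.1 hx).2; exact absurd h (fun h => h))).trans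
          (Finset.sum_eq_zero (fun x hx => by have h := (Finset.mem_filter.1 hx).2; exact absurd h (fun h => h))).symm
      | inr w =>
        rw [row_sum_inr, row_sum_inr]
        exact hr v v' hvv' w
  · rintro (w | w) (w' | w') hww' v <;> (rw [rightSetoid] at hww'; simp only [] at hww')
    · subst hww'; rfl
    · cases v with
      | inl v =>
        rw [col_sum_inr, col_sum_inr]
        exact (Finset.sum_eq_zero (fun x hx => by have h := (Finset.mem_filter.1 hx).2; exact absurd h (fun h => h))).trans
          (Finset.sum_eq_zero (fun x hx => by have h := (Finset.mem_filter.1 hx).2; exact absurd h (fun h => h))).symm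
      | inr v =>
        rw [col_sum_inr, col_sum_inr]
        exact hc w w' hww' v

end Sums

/-- Let `(s, t)` be the coarsest equitable joint partition of `A¹, A²`
(i.e. the coarsest equitable partition of `A¹ ⊕ A²`). Then for `i = 1, 2`, its restriction
to the index sets of `Aⁱ` is the coarsest equitable partition of `Aⁱ`. -/
theorem coarsest_joint_partition_restricts_to_coarsest
    {V1 W1 V2 W2 : Type*} [Fintype V1] [Fintype W1] [Fintype V2] [Fintype W2]
    (A1 : Matrix V1 W1 ℝ) (A2 : Matrix V2 W2 ℝ)
    (s : Setoid (V1 ⊕ V2)) (t : Setoid (W1 ⊕ W2))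
    (hco : CoarsestEquitable (dsum A1 A2) s t) :
    CoarsestEquitable A1 (Setoid.comap Sum.inl s) (Setoid.comap Sum.inl t) ∧
    CoarsestEquitable A2 (Setoid.comap Sum.inr s) (Setoid.comap Sum.inr t) := by
  obtain ⟨⟨hr, hc⟩, hcoarse⟩ := hco
  constructor
  · constructor
    · constructor
      · intro v v' hvv' w
        have := hr (.inl v) (.inl v') hvv' (.inl w)
        rwa [row_sum_inl, row_sum_inl] at this
      · intro w w' hww' v
        have := hc (.inl w) (.inl w') hww' (.inl v)
        rwa [col_sum_inl, col_sum_inl] at this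
    · intro s' t' h'
      have := hcoarse (leftSetoid s') (leftSetoid t') (left_equitable A1 A2 s' t' h')
      exact ⟨fun v v' hv => this.1 _ _ hv, fun w w' hw => this.2 _ _ hw⟩
  · constructor
    · constructor
      · intro v v' hvv' w
        have := hr (.inr v) (.inr v') hvv' (.inr w)
        rwa [row_sum_inr, row_sum_inr] at this
      · intro w w' hww' v
        have := hc (.inr w) (.inr w') hww' (.inr v)
        rwa [col_sum_inr, col_sum_inr] at this
    · intro s' t' h'
      have := hcoarse (rightSetoid s') (rightSetoid t') (right_equitable A1 A2 s' t' h')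
      exact ⟨fun v v' hv => this.1 _ _ hv, fun w w' hw => this.2 _ _ hw⟩
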